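/- Suppose F_l > 0 and 0 < p^d ≤ (1−θ)·F_l. In any PBE (σ*, β*), if σ^t*_l > σ̂^t_l, then β*(l|H) > p^d/F_l and σ^d*_H = 1. -/

import Mathlib

open Set

/-- Perfect Bayesian equilibrium of the two-server misbehavior-inspection signaling game.
The strategy profile is `(sh, sl, dH, dL)` (misbehavior rates of types `h` and `l`, and the
operator's inspection probabilities on servers `H` and `L`) and the belief assessment is
`(bhH, blH, bhL, blL)`. -/
def IsPBE (θ pth ptl pd Fh Fl : ℝ) (cH cL : ℝ → ℝ → ℝ)
    (sh sl dH dL bhH blH bhL blL : ℝ) : Prop :=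
  sh ∈ Icc (0:ℝ) 1 ∧ sl ∈ Icc (0:ℝ) 1 ∧ dH ∈ Icc (0:ℝ) 1 ∧ dL ∈ Icc (0:ℝ) 1 ∧
  bhH ∈ Icc (0:ℝ) 1 ∧ blH = 1 - bhH ∧ bhL ∈ Icc (0:ℝ) 1 ∧ blL = 1 - bhL ∧
  -- sequential rationality of type h agents
  (0 < sh → -(cL sh sl) - pth - Fh * dL ≥ -(cH sh sl)) ∧
  (sh < 1 → -(cL sh sl) - pth - Fh * dL ≤ -(cH sh sl)) ∧
  -- sequential rationality of type l agents
  (0 < sl → -(cH sh sl) - ptl - Fl * dH ≥ -(cL sh sl)) ∧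
  (sl < 1 → -(cH sh sl) - ptl - Fl * dH ≤ -(cL sh sl)) ∧
  -- operator optimality on servers H and L
  (∀ x ∈ Icc (0:ℝ) 1, (-pd + Fl * blH) * x ≤ (-pd + Fl * blH) * dH) ∧
  (∀ x ∈ Icc (0:ℝ) 1, (-pd + Fh * bhL) * x ≤ (-pd + Fh * bhL) * dL) ∧
  -- consistency of beliefs (Bayes' rule)
  (0 < θ * (1 - sh) + (1 - θ) * sl →
    bhH = θ * (1 - sh) / (θ * (1 - sh) + (1 - θ) * sl)) ∧
  (0 < θ * sh + (1 - θ) * (1 - sl) →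
    bhL = θ * sh / (θ * sh + (1 - θ) * (1 - sl)))

/-- Best response, high misbehavior: if `sl > σ̂` in a PBE, then `β*(l|H) > pd/Fl`
and the operator inspects server H with probability one. -/
theorem best_response_above_threshold
    (θ pth ptl pd Fh Fl : ℝ) (cH cL : ℝ → ℝ → ℝ)
    (hθ : θ ∈ Ioo (0:ℝ) 1) (hpth : 0 ≤ pth) (hptl : 0 < ptl)
    (hpd : 0 < pd) (hFh : 0 ≤ Fh) (hFl : 0 ≤ Fl)
    (hA1 : cH 0 0 < cL 0 0 ∧ cL 0 1 < cH 0 1)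
    (hA2Hh : ∀ y ∈ Icc (0:ℝ) 1, StrictAntiOn (fun x => cH x y) (Icc 0 1))
    (hA2Hl : ∀ x ∈ Icc (0:ℝ) 1, StrictMonoOn (fun y => cH x y) (Icc 0 1))
    (hA2Lh : ∀ y ∈ Icc (0:ℝ) 1, StrictMonoOn (fun x => cL x y) (Icc 0 1))
    (hA2Ll : ∀ x ∈ Icc (0:ℝ) 1, StrictAntiOn (fun y => cL x y) (Icc 0 1))
    (hFl' : 0 < Fl) (hpdle : pd ≤ (1 - θ) * Fl)
    (sh sl dH dL bhH blH bhL blL : ℝ)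
    (hPBE : IsPBE θ pth ptl pd Fh Fl cH cL sh sl dH dL bhH blH bhL blL)
    (hgt : pd * θ / ((1 - θ) * (Fl - pd)) < sl) :
    pd / Fl < blH ∧ dH = 1 := by
  obtain ⟨hsh, hsl, hdH, hdL, hbhH, hblHe, hbhL, hblLe, _, _, _, _, hopH, _, hbayesH, _⟩ := hPBE
  obtain ⟨hθ0, hθ1⟩ := hθ
  have hFlpd : 0 < Fl - pd := by nlinarith
  have hden : 0 < (1 - θ) * (Fl - pd) := by nlinarith
  have hsl0 : 0 < sl := lt_trans (by positivity) hgt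
  have hkey : pd * θ < sl * ((1 - θ) * (Fl - pd)) := by
    rwa [div_lt_iff₀ hden] at hgt
  have hD : 0 < θ * (1 - sh) + (1 - θ) * sl := by nlinarith [hsh.2, hsh.1]
  have hbhHv := hbayesH hD
  have hblHv : blH = (1 - θ) * sl / (θ * (1 - sh) + (1 - θ) * sl) := by
    rw [hblHe, hbhHv]; field_simp; ring
  have h1 : pd / Fl < blH := by
    rw [hblHv, div_lt_div_iff₀ hFl' hD]
    nlinarith [hsh.1, hsh.2, mul_nonneg (mul_nonneg hpd.le hθ0.le) hsh.1]
  refine ⟨h1, ?_⟩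
  have hpos : 0 < -pd + Fl * blH := by
    have := (div_lt_iff₀ hFl').mp h1
    nlinarith
  have h2 := hopH 1 (by constructor <;> norm_num)
  have : (1:ℝ) ≤ dH := le_of_mul_le_mul_left (by linarith [h2]) hpos
  linarith [hdH.2]
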